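/- For the Fibonacci automaton, for every natural number k and every 2-level store ω over Γ = {Z, X_1, X_2, F}, there is a finite sequence of steps leading from the configuration (q_0, a^{f_k}, (X_2, F^k)·ω) to the configuration (q_0, ε, ω), where (X_2, F^k)·ω denotes the store whose top entry is (X_2, F^k) followed by the entries of ω. -/

import Mathlib

/-- Operations on a 2-level iterated pushdown store. -/
inductive Op (Γ : Type*) where
  | pop1 : Op Γ
  | pop2 : Op Γ
  | push1 : List Γ → Op Γ
  | push2 : List Γ → Op Γ

/-- A 2-level pushdown store: a finite list of entries `(A, s)` with `A` a letter of `Γ`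
and `s ∈ Γ*` the inner store of the entry. -/
abbrev Store (Γ : Type*) := List (Γ × List Γ)

/-- The top symbols of a 2-level store: the letter of the top entry followed by the first
letter of its inner store when that inner store is nonempty; an element of `Γ ∪ Γ²`. -/
def topsym {Γ : Type*} : Store Γ → List Γ
  | [] => []
  | (A, s) :: _ => A :: s.take 1

/-- Apply an operation to a 2-level store (a partial operation):
`pop1` removes the top entry; `pop2` removes the first letter of the inner store of the
top entry (when nonempty); `push1 w` replaces the top entry `(A, s)` by the entries
`(w_1, s), …, (w_m, s)`; `push2 u` replaces the top entry `(A, s)` by `(A, u ++ s)`. -/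
def applyOp {Γ : Type*} : Op Γ → Store Γ → Option (Store Γ)
  | .pop1, _ :: rest => some rest
  | .pop2, (A, _ :: s) :: rest => some ((A, s) :: rest)
  | .push1 w, (_, s) :: rest => some (w.map (fun x => (x, s)) ++ rest)
  | .push2 u, (A, s) :: rest => some ((A, u ++ s) :: rest)
  | _, _ => none

/-- A 2-iterated pushdown automaton with state set `Q`, input alphabet `In` and store
alphabet `Γ`: an initial state `q0`, an initial store symbol `Z`, and a transition table
`δ` assigning to each triple `(q, a, t)` — with `a ∈ In ∪ {ε}` and `t ∈ Γ ∪ Γ²` — a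
finite set (list) of instructions `(q', op)`. -/
structure IPDA2 (Q In Γ : Type*) where
  q0 : Q
  Z : Γ
  δ : Q → Option In → List Γ → List (Q × Op Γ)

/-- A configuration: current state, remaining input word, current 2-level store. -/
abbrev Config (Q In Γ : Type*) := Q × List In × Store Γ

/-- One computation step: an instruction from `δ(q, a, topsym ω)` may be applied, where
`a = ε` (no input consumed) or `a` is the first letter of the remaining input (which is
then consumed); the state changes to `q'` and the operation is applied to the store. -/
inductive IPDA2.Step {Q In Γ : Type*} (M : IPDA2 Q In Γ) :
    Config Q In Γ → Config Q In Γ → Prop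
  | eps {q q' : Q} {w : List In} {ω ω' : Store Γ} {op : Op Γ} :
      (q', op) ∈ M.δ q none (topsym ω) → applyOp op ω = some ω' →
      M.Step (q, w, ω) (q', w, ω')
  | read {q q' : Q} {a : In} {w : List In} {ω ω' : Store Γ} {op : Op Γ} :
      (q', op) ∈ M.δ q (some a) (topsym ω) → applyOp op ω = some ω' →
      M.Step (q, a :: w, ω) (q', w, ω')

/-- A finite sequence of computation steps. -/
def IPDA2.Steps {Q In Γ : Type*} (M : IPDA2 Q In Γ) :
    Config Q In Γ → Config Q In Γ → Prop :=
  Relation.ReflTransGen M.Step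

/-- Acceptance: some finite sequence of steps leads from the initial configuration
`(q0, w, [(Z, ε)])` to a configuration with empty remaining input and empty store. -/
def IPDA2.Accepts {Q In Γ : Type*} (M : IPDA2 Q In Γ) (w : List In) : Prop :=
  ∃ q : Q, M.Steps (M.q0, w, [(M.Z, [])]) (q, [], [])

/-- The states of the Fibonacci automaton. -/
inductive QF where
  | q0 : QF
  | q1 : QF
  | q2 : QF
  deriving DecidableEq

/-- The one-letter input alphabet `{a}` of the Fibonacci automaton. -/
inductive InA where
  | a : InA
  deriving DecidableEq

/-- The store alphabet `Γ = {Z, X₁, X₂, F}` of the Fibonacci automaton. -/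
inductive ΓF where
  | Z : ΓF
  | X1 : ΓF
  | X2 : ΓF
  | F : ΓF
  deriving DecidableEq

/-- The transition table of the Fibonacci automaton. -/
def fibδ : QF → Option InA → List ΓF → List (QF × Op ΓF)
  | .q0, none, [.Z] => [(.q0, .push2 [.F]), (.q0, .push1 [.X2])]
  | .q0, none, [.Z, .F] => [(.q0, .push2 [.F]), (.q0, .push1 [.X2])]
  | .q0, none, [.X1, .F] => [(.q1, .pop2)]
  | .q0, none, [.X2, .F] => [(.q2, .pop2)]
  | .q0, some .a, [.X1] => [(.q0, .pop1)]
  | .q0, some .a, [.X2] => [(.q0, .pop1)]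
  | .q1, none, [.X1, .F] => [(.q0, .push1 [.X1, .X2])]
  | .q1, none, [.X1] => [(.q0, .push1 [.X1, .X2])]
  | .q2, none, [.X2, .F] => [(.q0, .push1 [.X1])]
  | .q2, none, [.X2] => [(.q0, .push1 [.X1])]
  | _, _, _ => []

/-- The Fibonacci automaton, the 2-iterated pushdown automaton recognizing `{a^{f_n}}`. -/
def fibM : IPDA2 QF InA ΓF := ⟨.q0, .Z, fibδ⟩

lemma step_append {Q In Γ : Type*} {M : IPDA2 Q In Γ} {c c' : Config Q In Γ}
    (v : List In) (h : M.Step c c') :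
    M.Step (c.1, c.2.1 ++ v, c.2.2) (c'.1, c'.2.1 ++ v, c'.2.2) := by
  cases h with
  | eps h1 h2 => exact IPDA2.Step.eps h1 h2
  | read h1 h2 => exact IPDA2.Step.read h1 h2

lemma steps_append {Q In Γ : Type*} {M : IPDA2 Q In Γ} {c c' : Config Q In Γ}
    (v : List In) (h : M.Steps c c') :
    M.Steps (c.1, c.2.1 ++ v, c.2.2) (c'.1, c'.2.1 ++ v, c'.2.2) := by
  induction h with
  | refl => exact Relation.ReflTransGen.refl
  | tail _ hstep ih => exact ih.tail (step_append v hstep)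

lemma fib_both (k : ℕ) :
    (∀ ω : Store ΓF, fibM.Steps (QF.q0, List.replicate (Nat.fib (k + 1)) InA.a,
        (ΓF.X2, List.replicate k ΓF.F) :: ω) (QF.q0, [], ω)) ∧
    (∀ ω : Store ΓF, fibM.Steps (QF.q0, List.replicate (Nat.fib (k + 2)) InA.a,
        (ΓF.X1, List.replicate k ΓF.F) :: ω) (QF.q0, [], ω)) := by
  induction k with
  | zero =>
    constructor <;> intro ω <;>
    · simp only [Nat.fib_one, Nat.fib_two, List.replicate_one, List.replicate_zero]
      refine Relation.ReflTransGen.single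
        (IPDA2.Step.read (q' := QF.q0) (op := .pop1) (by simp [fibM, fibδ, topsym]) rfl)
  | succ k ih =>
    obtain ⟨ih2, ih1⟩ := ih
    have hδ2 : ∀ s : Store ΓF, (QF.q0, Op.push1 [ΓF.X1]) ∈
        fibM.δ QF.q2 none (topsym ((ΓF.X2, List.replicate k ΓF.F) :: s)) := by
      intro s; cases k <;> simp [fibM, fibδ, topsym]
    have hδ1 : ∀ s : Store ΓF, (QF.q0, Op.push1 [ΓF.X1, ΓF.X2]) ∈
        fibM.δ QF.q1 none (topsym ((ΓF.X1, List.replicate k ΓF.F) :: s)) := by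
      intro s; cases k <;> simp [fibM, fibδ, topsym]
    constructor
    · intro ω
      refine Relation.ReflTransGen.head
        (IPDA2.Step.eps (q' := QF.q2) (op := .pop2) (by simp [fibM, fibδ, topsym]) rfl) ?_
      refine Relation.ReflTransGen.head (IPDA2.Step.eps (q' := QF.q0) (hδ2 _) rfl) ?_
      exact ih1 ω
    · intro ω
      refine Relation.ReflTransGen.head
        (IPDA2.Step.eps (q' := QF.q1) (op := .pop2) (by simp [fibM, fibδ, topsym]) rfl) ?_
      refine Relation.ReflTransGen.head (IPDA2.Step.eps (q' := QF.q0) (hδ1 _) rfl) ?_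
      have hsplit : List.replicate (Nat.fib (k + 1 + 2)) InA.a =
          List.replicate (Nat.fib (k + 2)) InA.a ++ List.replicate (Nat.fib (k + 1)) InA.a := by
        rw [← List.replicate_add, Nat.add_comm (Nat.fib (k + 2))]
        congr 1
        exact Nat.fib_add_two
      rw [hsplit]
      have h1 := steps_append (M := fibM) (List.replicate (Nat.fib (k + 1)) InA.a)
        (ih1 ((ΓF.X2, List.replicate k ΓF.F) :: ω))
      simp only at h1
      refine h1.trans ?_
      simpa [IPDA2.Steps] using ih2 ω

/-- For the Fibonacci automaton, for every `k : ℕ` and every 2-level store `ω` over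
`Γ = {Z, X₁, X₂, F}`, a finite sequence of steps leads from the configuration
`(q₀, a^{f_k}, (X₂, F^k)·ω)` to `(q₀, ε, ω)`. Here `f_k = Nat.fib (k+1)` (the Fibonacci
sequence with `f_0 = f_1 = 1`). -/
theorem fibM_steps_X2 (k : ℕ) (ω : Store ΓF) :
    fibM.Steps (QF.q0, List.replicate (Nat.fib (k + 1)) InA.a,
        (ΓF.X2, List.replicate k ΓF.F) :: ω)
      (QF.q0, [], ω) := by
  exact (fib_both k).1 ω
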